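/- Let n, d be integers with 1 ≤ d ≤ ⌊(n-1)/2⌋, and set h(n,d) := C(n-d, 2) + d². If G is a nonhamiltonian graph on n vertices with minimum degree at least d, then e(G) ≤ max{h(n,d), h(n, ⌊(n-1)/2⌋)}. -/

import Mathlib

open SimpleGraph Finset Function

namespace Erdos

variable {V : Type*} [DecidableEq V] {G : SimpleGraph V}

/-- If `p` is a path starting at `a` and `s(a,x)` is an edge of `p`, then `p` starts with the
edge `a x`. -/
lemma exists_cons_of_mem_edges {a b x : V} {p : G.Walk a b} (hp : p.IsPath)
    (hx : s(a, x) ∈ p.edges) : ∃ (h : G.Adj a x) (q : G.Walk x b), p = SimpleGraph.Walk.cons h q := by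
  cases p with
  | nil => simp at hx
  | cons h q =>
    rename_i c
    rw [SimpleGraph.Walk.edges_cons, List.mem_cons] at hx
    rcases hx with hx | hx
    · rw [Sym2.eq_iff] at hx
      rcases hx with ⟨-, rfl⟩ | ⟨rfl, rfl⟩ <;>
        exact ⟨h, q, rfl⟩
    · exfalso
      have : a ∈ q.support := SimpleGraph.Walk.fst_mem_support_of_mem_edges q hx
      rw [SimpleGraph.Walk.cons_isPath_iff] at hp
      exact hp.2 this

/-- A walk can be split at any of its darts, in the weak sense that the support splits. -/
lemma exists_split_of_mem_darts {a b : V} {p : G.Walk a b} {d : G.Dart} (hd : d ∈ p.darts) :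
    ∃ (q1 : G.Walk a d.fst) (q2 : G.Walk d.snd b),
      p.support = q1.support ++ q2.support := by
  induction p with
  | nil => simp at hd
  | cons h q ih =>
    rw [SimpleGraph.Walk.darts_cons, List.mem_cons] at hd
    rcases hd with rfl | hd
    · exact ⟨SimpleGraph.Walk.nil, q, by simp⟩
    · obtain ⟨q1, q2, hq⟩ := ih hd
      exact ⟨SimpleGraph.Walk.cons h q1, q2, by simp [hq]⟩

end Erdos

namespace Erdos2

open SimpleGraph Walk

variable {V : Type*} [DecidableEq V]

lemma ham_reverse {G : SimpleGraph V} {a b : V} {p : G.Walk a b} (hp : p.IsHamiltonian) :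
    p.reverse.IsHamiltonian := by
  intro x
  rw [Walk.support_reverse, List.count_reverse]
  exact hp x

lemma ham_transfer {G H : SimpleGraph V} {a b : V} {p : G.Walk a b} (hp : p.IsHamiltonian)
    (hs : ∀ e ∈ p.edges, e ∈ H.edgeSet) : (p.transfer H hs).IsHamiltonian := by
  intro x
  rw [Walk.support_transfer]
  exact hp x

/-- Through any nodup list avoiding distinct `a, b` there is a path in `⊤` from `a` to `b`. -/
lemma exists_top_walk (l : List V) : ∀ (a b : V), a ∉ l → b ∉ l → a ≠ b → l.Nodup →
    ∃ p : (⊤ : SimpleGraph V).Walk a b, p.support = a :: (l ++ [b]) := by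
  induction l with
  | nil => exact fun a b _ _ hab _ => ⟨Walk.cons (by simpa using hab) Walk.nil, by simp⟩
  | cons c l ih =>
    intro a b ha hb hab hnd
    have hcb : c ≠ b := fun h => hb (by rw [← h]; exact List.mem_cons_self)
    have hac : a ≠ c := fun h => ha (by rw [h]; exact List.mem_cons_self)
    obtain ⟨p, hp⟩ := ih c b (List.Nodup.notMem hnd) (fun h => hb (List.mem_cons_of_mem _ h))
      hcb hnd.of_cons
    exact ⟨Walk.cons (by simpa using hac) p, by simp [hp]⟩

lemma top_isHamiltonian [Fintype V] (h3 : 3 ≤ Fintype.card V) :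
    (⊤ : SimpleGraph V).IsHamiltonian := by
  intro _
  classical
  have hcard : (Finset.univ : Finset V).toList.length = Fintype.card V := by
    simp [Finset.length_toList]
  have hnd : (Finset.univ : Finset V).toList.Nodup := Finset.nodup_toList _
  obtain ⟨x, y, l, hl⟩ : ∃ (x y : V) (l : List V),
      (Finset.univ : Finset V).toList = x :: y :: l := by
    rcases h : (Finset.univ : Finset V).toList with _ | ⟨x, _ | ⟨y, l⟩⟩ <;>
      first
        | (exact ⟨x, y, l, rfl⟩)
        | (exfalso; rw [h] at hcard; simp at hcard; omega)
  rw [hl] at hnd hcard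
  have hxy : x ≠ y := by simp [List.nodup_cons] at hnd; tauto
  have hxl : x ∉ l := by simp [List.nodup_cons] at hnd; tauto
  have hyl : y ∉ l := by simp [List.nodup_cons] at hnd; tauto
  obtain ⟨p, hp⟩ := exists_top_walk l y x hyl hxl hxy.symm (by simp_all [List.nodup_cons])
  have hperm : (y :: (l ++ [x])).Perm (x :: y :: l) := by
    refine List.Perm.trans (List.Perm.cons y (List.perm_append_singleton _ _)) ?_
    exact List.Perm.swap _ _ _
  have hpath : p.IsPath := Walk.IsPath.mk' (by rw [hp]; exact hperm.nodup_iff.mpr hnd)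
  have hedge : s(x, y) ∉ p.edges := by
    intro hmem
    obtain ⟨h, q, hq⟩ := Erdos.exists_cons_of_mem_edges hpath
      (by rw [Sym2.eq_swap]; exact hmem)
    have h2 := hp ▸ congrArg Walk.support hq
    rw [Walk.support_cons] at h2
    have hq2 : q.support = l ++ [x] := ((List.cons_eq_cons.mp h2).2).symm
    cases l with
    | nil => simp at hcard; omega
    | cons c l' =>
      rw [Walk.support_eq_cons q, List.cons_append] at hq2
      have hcx : x = c := (List.cons_eq_cons.mp hq2).1
      exact hxl (by rw [hcx]; exact List.mem_cons_self)
  refine ⟨x, Walk.cons (by simpa using hxy) p, ?_⟩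
  rw [Walk.isHamiltonianCycle_iff_isCycle_and_support_count_tail_eq_one]
  constructor
  · exact (Walk.cons_isCycle_iff p _).mpr ⟨hpath, hedge⟩
  · intro a
    rw [Walk.support_cons, List.tail_cons, hp]
    have hmem : a ∈ x :: y :: l := by rw [← hl]; simp [Finset.mem_toList]
    rw [hperm.count_eq]
    exact List.count_eq_one_of_mem hnd hmem

/-- The rotation argument: if a nonhamiltonian graph has a hamiltonian path from `u` to `v`,
and `d` is a dart of the path with `u` adjacent to `d.snd` and `v` adjacent to `d.fst`,
we get a contradiction. -/
lemma rotation {H : SimpleGraph V} [Fintype V] (hham : ¬H.IsHamiltonian)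
    {u v : V} (hne : u ≠ v) (hadj : ¬H.Adj u v) {p : H.Walk u v} (hp : p.IsHamiltonian)
    {d : H.Dart} (hd : d ∈ p.darts) (hdu : H.Adj u d.snd) (hdv : H.Adj v d.fst) : False := by
  obtain ⟨q1, q2, hsupp⟩ := Erdos.exists_split_of_mem_darts hd
  have hnodup : (q1.support ++ q2.support).Nodup := by
    rw [← hsupp]; exact hp.isPath.support_nodup
  have hdisj : q1.support.Disjoint q2.support := List.disjoint_of_nodup_append hnodup
  let P : H.Walk v d.fst := q2.reverse.append (Walk.cons hdu.symm q1)
  have hPsupp : P.support = q2.support.reverse ++ q1.support := by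
    show (q2.reverse.append (Walk.cons hdu.symm q1)).support = _
    rw [Walk.support_append, Walk.support_reverse, Walk.support_cons, List.tail_cons]
  have hPperm : P.support.Perm (q1.support ++ q2.support) := by
    rw [hPsupp]
    exact List.perm_append_comm.trans ((q2.support.reverse_perm).append_left q1.support)
  have hPpath : P.IsPath := Walk.IsPath.mk' (hPperm.nodup_iff.mpr hnodup)
  have hPedge : s(d.fst, v) ∉ P.edges := by
    intro hmem
    rw [show P = q2.reverse.append (Walk.cons hdu.symm q1) from rfl] at hmem
    rw [Walk.edges_append, Walk.edges_reverse, Walk.edges_cons, List.mem_append,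
      List.mem_reverse, List.mem_cons] at hmem
    rcases hmem with hmem | hmem | hmem
    · have hz2 : d.fst ∈ q2.support := Walk.fst_mem_support_of_mem_edges q2 hmem
      exact hdisj (Walk.end_mem_support q1) hz2
    · rw [Sym2.eq_iff] at hmem
      rcases hmem with ⟨-, hvu⟩ | ⟨-, hvx⟩
      · exact hne hvu.symm
      · exact hadj (hvx ▸ hdu)
    · have hv1 : v ∈ q1.support := Walk.snd_mem_support_of_mem_edges q1 hmem
      exact hdisj hv1 (Walk.end_mem_support q2)
  let c : H.Walk d.fst d.fst := Walk.cons hdv.symm P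
  have hcyc : c.IsHamiltonianCycle := by
    rw [Walk.isHamiltonianCycle_iff_isCycle_and_support_count_tail_eq_one]
    constructor
    · exact (Walk.cons_isCycle_iff P hdv.symm).mpr ⟨hPpath, hPedge⟩
    · intro a
      show List.count a (Walk.cons hdv.symm P).support.tail = 1
      rw [Walk.support_cons, List.tail_cons, hPperm.count_eq, ← hsupp]
      exact hp a
  exact hham (fun _ => ⟨d.fst, c, hcyc⟩)

lemma crossing {H : SimpleGraph V} [Fintype V] (hham : ¬H.IsHamiltonian)
    {u v : V} (hne : u ≠ v) (hadj : ¬H.Adj u v)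
    {p : H.Walk u v} (hp : p.IsHamiltonian) :
    ∃ φ : V → V, Set.InjOn φ {x | H.Adj u x} ∧
      ∀ x, H.Adj u x → φ x ≠ v ∧ ¬H.Adj v (φ x) := by
  classical
  have hex : ∀ x, H.Adj u x → ∃ d ∈ p.darts, d.snd = x := by
    intro x hx
    have hxsupp : x ∈ p.support := hp.mem_support x
    have hxtail : x ∈ p.support.tail := by
      rw [Walk.support_eq_cons] at hxsupp
      rcases List.mem_cons.mp hxsupp with rfl | h
      · exact absurd hx (H.irrefl)
      · exact h
    rw [← Walk.map_snd_darts, List.mem_map] at hxtail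
    obtain ⟨d, hd, hds⟩ := hxtail
    exact ⟨d, hd, hds⟩
  set φ : V → V := fun x =>
    if h : ∃ d ∈ p.darts, d.snd = x then (Classical.choose h).fst else x with hφ
  have hφd : ∀ x, H.Adj u x → ∃ d ∈ p.darts, d.snd = x ∧ φ x = d.fst := by
    intro x hx
    have h := hex x hx
    refine ⟨Classical.choose h, (Classical.choose_spec h).1, (Classical.choose_spec h).2, ?_⟩
    simp only [hφ, dif_pos h]
  -- v is not in the dropLast of the support
  have hvd : v ∉ p.support.dropLast := by
    have h1 : p.support.reverse = v :: p.reverse.support.tail := by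
      conv_lhs => rw [← Walk.support_reverse]
      exact p.reverse.support_eq_cons
    have h2 : p.support = p.reverse.support.tail.reverse ++ [v] := by
      rw [← List.reverse_reverse p.support, h1, List.reverse_cons]
    have h3 := hp v
    rw [h2, List.count_append, List.count_singleton] at h3
    simp only [beq_self_eq_true, if_true] at h3
    have h4 : List.count v p.reverse.support.tail.reverse = 0 := by omega
    rw [h2, List.dropLast_concat]
    exact List.count_eq_zero.mp h4
  have hfst : ∀ {d : H.Dart}, d ∈ p.darts → d.fst ∈ p.support.dropLast := by
    intro d hd
    rw [← Walk.map_fst_darts]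
    exact List.mem_map_of_mem hd
  refine ⟨φ, ?_, ?_⟩
  · -- injectivity
    intro x hx y hy hxy
    obtain ⟨dx, hdx, hdxs, hdxf⟩ := hφd x hx
    obtain ⟨dy, hdy, hdys, hdyf⟩ := hφd y hy
    have hnd : (p.darts.map (·.fst)).Nodup := by
      rw [Walk.map_fst_darts]
      exact hp.isPath.support_nodup.sublist (List.dropLast_sublist _)
    have : dx = dy := List.inj_on_of_nodup_map hnd hdx hdy (by rw [← hdxf, ← hdyf, hxy])
    rw [← hdxs, ← hdys, this]
  · intro x hx
    obtain ⟨d, hd, hds, hdf⟩ := hφd x hx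
    constructor
    · rw [hdf]
      intro hv
      exact hvd (hv ▸ hfst hd)
    · intro hvφ
      rw [hdf] at hvφ
      exact rotation hham hne hadj hp hd (hds ▸ hx) hvφ

lemma degree_sum_le {H : SimpleGraph V} [Fintype V] [DecidableRel H.Adj]
    (hham : ¬H.IsHamiltonian) {u v : V} (hne : u ≠ v) (hadj : ¬H.Adj u v)
    {p : H.Walk u v} (hp : p.IsHamiltonian) :
    H.degree u + H.degree v ≤ Fintype.card V - 1 := by
  classical
  obtain ⟨φ, hinj, hprop⟩ := crossing hham hne hadj hp
  set A := H.neighborFinset u with hA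
  set B := H.neighborFinset v with hB
  have hcardA : (A.image φ).card = A.card := by
    apply Finset.card_image_of_injOn
    intro x hx y hy hxy
    exact hinj (by simpa [hA] using hx) (by simpa [hA] using hy) hxy
  have hsub : A.image φ ∪ B ⊆ Finset.univ.erase v := by
    intro w hw
    rcases Finset.mem_union.mp hw with hw | hw
    · obtain ⟨x, hx, rfl⟩ := Finset.mem_image.mp hw
      exact Finset.mem_erase.mpr ⟨(hprop x (by simpa [hA] using hx)).1, Finset.mem_univ _⟩
    · refine Finset.mem_erase.mpr ⟨?_, Finset.mem_univ _⟩
      rintro rfl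
      rw [hB, SimpleGraph.mem_neighborFinset] at hw
      exact H.irrefl hw
  have hdisj : Disjoint (A.image φ) B := by
    rw [Finset.disjoint_left]
    intro w hw hwB
    obtain ⟨x, hx, rfl⟩ := Finset.mem_image.mp hw
    exact (hprop x (by simpa [hA] using hx)).2 (by simpa [hB] using hwB)
  have := Finset.card_le_card hsub
  rw [Finset.card_union_of_disjoint hdisj, hcardA, Finset.card_erase_of_mem (Finset.mem_univ v),
    Finset.card_univ] at this
  simpa [hA, hB, SimpleGraph.card_neighborFinset_eq_degree] using this

lemma exists_ham_path {H : SimpleGraph V} [Fintype V] (hham : ¬H.IsHamiltonian)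
    (h3 : 3 ≤ Fintype.card V) (hmax : ∀ H', H < H' → H'.IsHamiltonian)
    {u v : V} (hne : u ≠ v) (hadj : ¬H.Adj u v) :
    ∃ p : H.Walk u v, p.IsHamiltonian := by
  classical
  set H' := H ⊔ SimpleGraph.edge u v with hH'
  have hlt : H < H' := by
    rw [lt_iff_le_and_ne]
    refine ⟨le_sup_left, ?_⟩
    intro h
    apply hadj
    have : H'.Adj u v := by
      rw [hH', SimpleGraph.sup_adj, SimpleGraph.edge_adj]
      exact Or.inr ⟨Or.inl ⟨rfl, rfl⟩, hne⟩
    rwa [← h] at this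
  have hsubE : ∀ e ∈ H'.edgeSet, e ≠ s(u, v) → e ∈ H.edgeSet := by
    intro e he hne'
    rw [hH', SimpleGraph.edgeSet_sup, Set.mem_union, SimpleGraph.edge_edgeSet_of_ne hne] at he
    rcases he with he | he
    · exact he
    · exact absurd he hne'
  obtain ⟨a, c, hc⟩ := hmax H' hlt (by omega)
  have hmemc : s(u, v) ∈ c.edges := by
    by_contra hmem
    have hsub : ∀ e ∈ c.edges, e ∈ H.edgeSet := fun e he =>
      hsubE e (Walk.edges_subset_edgeSet c he) (fun h => hmem (h ▸ he))
    have hc' : (c.transfer H hsub).IsHamiltonianCycle := by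
      rw [Walk.isHamiltonianCycle_iff_isCycle_and_support_count_tail_eq_one]
      constructor
      · rw [Walk.isCycle_def]
        refine ⟨⟨?_⟩, ?_, ?_⟩
        · rw [Walk.edges_transfer]
          exact hc.isCycle.edges_nodup
        · intro hnil
          apply hc.isCycle.ne_nil
          have h0 := congrArg Walk.length hnil
          rw [Walk.length_transfer] at h0
          have : c.length = 0 := by simpa using h0
          rcases c with _ | _
          · rfl
          · simp at this
        · rw [Walk.support_transfer]
          exact hc.isCycle.support_nodup
      · intro b
        rw [Walk.support_transfer]
        exact (Walk.isHamiltonianCycle_iff_isCycle_and_support_count_tail_eq_one.mp hc).2 b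
    exact hham (fun _ => ⟨a, _, hc'⟩)
  have hu : u ∈ c.support := hc.mem_support u
  set c2 := c.rotate u hu with hc2def
  have hc2 : c2.IsHamiltonianCycle := by
    rw [Walk.isHamiltonianCycle_iff_isCycle_and_support_count_tail_eq_one]
    refine ⟨hc.isCycle.rotate hu, ?_⟩
    intro b
    rw [((Walk.support_rotate c u hu).perm).count_eq]
    exact (Walk.isHamiltonianCycle_iff_isCycle_and_support_count_tail_eq_one.mp hc).2 b
  have hmemc2 : s(u, v) ∈ c2.edges := (Walk.rotate_edges c u hu).perm.mem_iff.mpr hmemc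
  clear_value c2
  cases c2 with
  | nil => exact absurd rfl hc2.isCycle.ne_nil
  | cons h q =>
    rename_i w
    have hqham : q.IsHamiltonian := by
      intro b
      have := (Walk.isHamiltonianCycle_iff_isCycle_and_support_count_tail_eq_one.mp hc2).2 b
      rwa [Walk.support_cons, List.tail_cons] at this
    have hnodupE : (Walk.cons h q).edges.Nodup := hc2.isCycle.edges_nodup
    rw [Walk.edges_cons, List.nodup_cons] at hnodupE
    rw [Walk.edges_cons, List.mem_cons] at hmemc2
    by_cases hwv : w = v
    · subst hwv
      -- q : H'.Walk w u with s(u,w) ∉ q.edges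
      have hsub : ∀ e ∈ q.reverse.edges, e ∈ H.edgeSet := by
        intro e he
        rw [Walk.edges_reverse, List.mem_reverse] at he
        refine hsubE e (Walk.edges_subset_edgeSet q he) ?_
        intro heq
        subst heq
        exact hnodupE.1 he
      exact ⟨(q.reverse).transfer H hsub, ham_transfer (ham_reverse hqham) hsub⟩
    · have hmemq : s(u, v) ∈ q.edges := by
        rcases hmemc2 with heq | hm
        · rw [Sym2.eq_iff] at heq
          rcases heq with ⟨-, hvw⟩ | ⟨huw, -⟩
          · exact absurd hvw.symm hwv
          · exact absurd huw h.ne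
        · exact hm
      have hqrevpath : q.reverse.IsPath := hqham.isPath.reverse
      have hmemqrev : s(u, v) ∈ q.reverse.edges := by
        rw [Walk.edges_reverse, List.mem_reverse]; exact hmemq
      obtain ⟨h', r, hr⟩ := Erdos.exists_cons_of_mem_edges hqrevpath hmemqrev
      -- r : H'.Walk v w, q.reverse = cons h' r
      have hrsupp : q.reverse.support = u :: r.support := by rw [hr, Walk.support_cons]
      have hredges : q.reverse.edges = s(u, v) :: r.edges := by rw [hr, Walk.edges_cons]
      have hnotmemr : s(u, v) ∉ r.edges := by
        have : q.reverse.edges.Nodup := by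
          rw [Walk.edges_reverse, List.nodup_reverse]
          exact hnodupE.2
        rw [hredges, List.nodup_cons] at this
        exact this.1
      set P : H'.Walk u v := Walk.cons h r.reverse with hP
      have hPham : P.IsHamiltonian := by
        intro b
        have h1 : List.count b q.reverse.support = 1 := by
          rw [Walk.support_reverse, List.count_reverse]
          exact hqham b
        rw [hrsupp] at h1
        rw [hP, Walk.support_cons, Walk.support_reverse]
        rw [List.count_cons] at h1 ⊢
        rw [List.count_reverse]
        exact h1
      have hsub : ∀ e ∈ P.edges, e ∈ H.edgeSet := by
        intro e he
        refine hsubE e (Walk.edges_subset_edgeSet P he) ?_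
        intro heq
        subst heq
        rw [hP, Walk.edges_cons, List.mem_cons] at he
        rcases he with heq | he
        · rw [Sym2.eq_iff] at heq
          rcases heq with ⟨-, hvw⟩ | ⟨huw, -⟩
          · exact hwv hvw.symm
          · exact h.ne huw
        · rw [Walk.edges_reverse, List.mem_reverse] at he
          exact hnotmemr he
      exact ⟨P.transfer H hsub, ham_transfer hPham hsub⟩

lemma f_step (n k : ℕ) (hk : k + 1 ≤ n) :
    (n - k).choose 2 + k ^ 2 + (2 * k + 1) =
      ((n - (k + 1)).choose 2 + (k + 1) ^ 2) + (n - (k + 1)) := by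
  have hm : n - k = (n - (k + 1)) + 1 := by omega
  rw [hm]
  rw [show (n - (k+1)) + 1 = (n - (k+1)) + 1 from rfl, Nat.choose_succ_succ (n - (k+1)) 1]
  rw [Nat.choose_one_right]
  ring

lemma f_mono_down (n : ℕ) : ∀ k i, i ≤ k → 3 * k ≤ n + 1 →
    (n - k).choose 2 + k ^ 2 ≤ (n - i).choose 2 + i ^ 2 := by
  intro k
  induction k with
  | zero => intro i hi _; interval_cases i; exact le_refl _
  | succ k ih =>
    intro i hi h3
    rcases Nat.eq_or_lt_of_le hi with rfl | hlt
    · exact le_refl _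
    · have hik : i ≤ k := by omega
      have hstep := f_step n k (by omega)
      have h1 : (n - (k+1)).choose 2 + (k+1) ^ 2 ≤ (n - k).choose 2 + k ^ 2 := by omega
      exact h1.trans (ih i hik (by omega))

lemma f_mono_up (n : ℕ) : ∀ K k, k ≤ K → 2 * K ≤ n - 1 → n ≤ 3 * k + 2 →
    (n - k).choose 2 + k ^ 2 ≤ (n - K).choose 2 + K ^ 2 := by
  intro K
  induction K with
  | zero => intro k hk _ _; interval_cases k; exact le_refl _
  | succ K ih =>
    intro k hk h2 h3
    rcases Nat.eq_or_lt_of_le hk with rfl | hlt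
    · exact le_refl _
    · have hkK : k ≤ K := by omega
      have hmid : (n - k).choose 2 + k ^ 2 ≤ (n - K).choose 2 + K ^ 2 :=
        ih k hkK (by omega) h3
      have hstep := f_step n K (by omega)
      have : (n - K).choose 2 + K ^ 2 ≤ (n - (K+1)).choose 2 + (K+1) ^ 2 := by
        have h4 : n - (K + 1) ≤ 2 * K + 1 := by omega
        omega
      exact hmid.trans this

lemma f_max (n d k K : ℕ) (hd : d ≤ k) (hk : k ≤ K) (hK : 2 * K ≤ n - 1) :
    (n - k).choose 2 + k ^ 2 ≤
      max ((n - d).choose 2 + d ^ 2) ((n - K).choose 2 + K ^ 2) := by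
  by_cases h : 3 * k ≤ n + 1
  · exact le_max_of_le_left (f_mono_down n k d hd h)
  · exact le_max_of_le_right (f_mono_up n K k hk hK (by omega))

end Erdos2

set_option maxHeartbeats 1000000 in
/-- Erdős' theorem: let `1 ≤ d ≤ ⌊(n-1)/2⌋` and `h(n,d) = C(n-d,2) + d²`. If `G` is a
nonhamiltonian graph on `n` vertices with minimum degree at least `d`, then
`e(G) ≤ max (h n d) (h n ⌊(n-1)/2⌋)`. -/
theorem stmt_6 {V : Type*} [Fintype V] [DecidableEq V] (G : SimpleGraph V)
    [DecidableRel G.Adj] (n d : ℕ) (hn : Fintype.card V = n)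
    (hd1 : 1 ≤ d) (hd2 : d ≤ (n - 1) / 2)
    (hham : ¬ G.IsHamiltonian)
    (hδ : ∀ v : V, d ≤ G.degree v) :
    G.edgeFinset.card ≤
      max ((n - d).choose 2 + d ^ 2) ((n - (n - 1) / 2).choose 2 + ((n - 1) / 2) ^ 2) := by
  classical
  have hn3 : 3 ≤ n := by omega
  obtain ⟨H, hHmem, hHmax⟩ := Set.Finite.exists_maximalFor id
    { F : SimpleGraph V | G ≤ F ∧ ¬F.IsHamiltonian } (Set.toFinite _) ⟨G, le_refl G, hham⟩
  obtain ⟨hGH, hHham⟩ := hHmem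
  have hmax : ∀ H', H < H' → H'.IsHamiltonian := by
    intro H' hlt
    by_contra hnh
    exact absurd (hHmax ⟨hGH.trans hlt.le, hnh⟩ hlt.le) (not_le_of_gt hlt)
  have hdegmono : ∀ w, G.degree w ≤ H.degree w := by
    intro w
    apply Finset.card_le_card
    intro x hx
    rw [SimpleGraph.mem_neighborFinset] at hx ⊢
    exact hGH hx
  have hdeg : ∀ w, d ≤ H.degree w := fun w => (hδ w).trans (hdegmono w)
  have hedgecard : G.edgeFinset.card ≤ H.edgeFinset.card :=
    Finset.card_le_card (SimpleGraph.edgeFinset_mono hGH)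
  have hdub : ∀ w, H.degree w ≤ n - 1 := by
    intro w
    have := H.degree_lt_card_verts w
    omega
  have hpairs : ∃ ab : V × V, ab.1 ≠ ab.2 ∧ ¬H.Adj ab.1 ab.2 := by
    by_contra h
    push_neg at h
    have htop : H = ⊤ := by
      ext a b
      simp only [SimpleGraph.top_adj]
      exact ⟨fun hab => hab.ne, fun hab => h (a, b) hab⟩
    exact hHham (htop ▸ Erdos2.top_isHamiltonian (by rw [hn]; exact hn3))
  set s : Finset (V × V) :=
    Finset.univ.filter (fun ab => ab.1 ≠ ab.2 ∧ ¬H.Adj ab.1 ab.2) with hs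
  have hsne : s.Nonempty := by
    obtain ⟨ab, h1, h2⟩ := hpairs
    exact ⟨ab, by simp [hs, h1, h2]⟩
  obtain ⟨ab, habs, habmax⟩ :=
    Finset.exists_max_image s (fun ab => H.degree ab.1 + H.degree ab.2) hsne
  rw [hs, Finset.mem_filter] at habs
  obtain ⟨u, v, hne, hadj, hdegle, hmaxsum⟩ :
      ∃ u v, u ≠ v ∧ ¬H.Adj u v ∧ H.degree u ≤ H.degree v ∧
        ∀ x y, x ≠ y → ¬H.Adj x y → H.degree x + H.degree y ≤ H.degree u + H.degree v := by
    rcases le_total (H.degree ab.1) (H.degree ab.2) with h | h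
    · exact ⟨ab.1, ab.2, habs.2.1, habs.2.2, h, fun x y hxy hxyadj =>
        habmax (x, y) (by simp [hs, hxy, hxyadj])⟩
    · refine ⟨ab.2, ab.1, habs.2.1.symm, fun hadj2 => habs.2.2 hadj2.symm, h, ?_⟩
      intro x y hxy hxyadj
      have := habmax (x, y) (by simp [hs, hxy, hxyadj])
      simp only at this
      omega
  have hsum : ∀ x y, x ≠ y → ¬H.Adj x y → H.degree x + H.degree y ≤ n - 1 := by
    intro x y hxy hxyadj
    obtain ⟨p, hp⟩ := Erdos2.exists_ham_path hHham (by rw [hn]; exact hn3) hmax hxy hxyadj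
    have := Erdos2.degree_sum_le hHham hxy hxyadj hp
    rwa [hn] at this
  set k := H.degree u with hk
  have hkd : d ≤ k := hdeg u
  have hk2 : 2 * k ≤ n - 1 := by
    have := hsum u v hne hadj
    omega
  obtain ⟨p, hp⟩ := Erdos2.exists_ham_path hHham (by rw [hn]; exact hn3) hmax hne hadj
  obtain ⟨φ, hinj, hprop⟩ := Erdos2.crossing hHham hne hadj hp
  set P : Finset V := (H.neighborFinset u).image φ with hP
  have hPcard : P.card = k := by
    rw [hP, Finset.card_image_of_injOn, SimpleGraph.card_neighborFinset_eq_degree]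
    intro x hx y hy hxy
    exact hinj (by simpa using hx) (by simpa using hy) hxy
  have hPdeg : ∀ w ∈ P, H.degree w ≤ k := by
    intro w hw
    obtain ⟨x, hx, rfl⟩ := Finset.mem_image.mp hw
    rw [SimpleGraph.mem_neighborFinset] at hx
    obtain ⟨hv, hva⟩ := hprop x hx
    have := hmaxsum (φ x) v hv (fun h => hva h.symm)
    omega
  set Q : Finset V := Finset.univ.filter (fun w => n - k ≤ H.degree w) with hQ
  have hQsub : Q ⊆ H.neighborFinset u := by
    intro w hw
    rw [hQ, Finset.mem_filter] at hw
    rw [SimpleGraph.mem_neighborFinset]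
    by_contra hadj2
    have hwu : w ≠ u := by
      rintro rfl
      omega
    have := hsum u w hwu.symm hadj2
    omega
  have hQcard : Q.card ≤ k := by
    have := Finset.card_le_card hQsub
    rwa [SimpleGraph.card_neighborFinset_eq_degree] at this
  have hPQ : Disjoint P Q := by
    rw [Finset.disjoint_left]
    intro w hwP hwQ
    rw [hQ, Finset.mem_filter] at hwQ
    have := hPdeg w hwP
    omega
  set R : Finset V := Finset.univ \ (P ∪ Q) with hR
  have hsplit : ∑ w ∈ P, H.degree w + ∑ w ∈ Q, H.degree w + ∑ w ∈ R, H.degree w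
      = ∑ w, H.degree w := by
    rw [← Finset.sum_union hPQ, hR, add_comm]
    exact Finset.sum_sdiff (Finset.subset_univ _)
  have hSP : ∑ w ∈ P, H.degree w ≤ k * k := by
    calc ∑ w ∈ P, H.degree w ≤ ∑ _w ∈ P, k := Finset.sum_le_sum hPdeg
    _ = k * k := by rw [Finset.sum_const, hPcard, smul_eq_mul]
  have hSQ : ∑ w ∈ Q, H.degree w ≤ Q.card * (n - 1) := by
    calc ∑ w ∈ Q, H.degree w ≤ ∑ _w ∈ Q, (n - 1) := Finset.sum_le_sum (fun w _ => hdub w)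
    _ = Q.card * (n - 1) := by rw [Finset.sum_const, smul_eq_mul]
  have hRdeg : ∀ w ∈ R, H.degree w ≤ n - 1 - k := by
    intro w hw
    rw [hR, Finset.mem_sdiff, Finset.mem_union] at hw
    have hwQ : w ∉ Q := fun h => hw.2 (Or.inr h)
    rw [hQ, Finset.mem_filter] at hwQ
    push_neg at hwQ
    have := hwQ (Finset.mem_univ w)
    omega
  have hSR : ∑ w ∈ R, H.degree w ≤ R.card * (n - 1 - k) := by
    calc ∑ w ∈ R, H.degree w ≤ ∑ _w ∈ R, (n - 1 - k) := Finset.sum_le_sum hRdeg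
    _ = R.card * (n - 1 - k) := by rw [Finset.sum_const, smul_eq_mul]
  have hRcard : R.card = n - (k + Q.card) := by
    rw [hR, Finset.card_sdiff_of_subset (Finset.subset_univ _), Finset.card_univ, hn,
      Finset.card_union_of_disjoint hPQ, hPcard]
  have hhandshake := H.sum_degrees_eq_twice_card_edges
  have h2e : 2 * H.edgeFinset.card ≤ k * k + Q.card * (n - 1) + (n - (k + Q.card)) * (n - 1 - k) := by
    rw [← hhandshake, ← hsplit]
    rw [hRcard] at hSR
    exact add_le_add (add_le_add hSP hSQ) hSR
  have hfk : H.edgeFinset.card ≤ (n - k).choose 2 + k ^ 2 := by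
    obtain ⟨m, hm1, hm2⟩ : ∃ m, n = m + k + 1 ∧ k ≤ m := ⟨n - k - 1, by omega, by omega⟩
    have hev : Even ((n - k) * (n - k - 1)) := by
      have h0 := Nat.even_mul_succ_self (n - k - 1)
      have heq : (n - k - 1) + 1 = n - k := by omega
      rw [heq] at h0
      rwa [mul_comm] at h0
    have hch : 2 * ((n - k).choose 2) = (n - k) * (n - k - 1) := by
      rw [Nat.choose_two_right]
      exact Nat.mul_div_cancel' hev.two_dvd
    obtain ⟨q, hq1, hq2⟩ : ∃ q, q = Q.card ∧ q ≤ k := ⟨Q.card, rfl, hQcard⟩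
    rw [← hq1] at h2e
    obtain ⟨r, hr1, hr2⟩ : ∃ r, n - (k + q) = r ∧ q + r = m + 1 := ⟨n - (k + q), rfl, by omega⟩
    rw [hr1] at h2e
    have hn1k : n - 1 - k = m := by omega
    have hn1 : n - 1 = m + k := by omega
    have hnk : n - k = m + 1 := by omega
    have hnk1 : n - k - 1 = m := by omega
    rw [hn1k, hn1] at h2e
    have key : q * k ≤ k * k := Nat.mul_le_mul_right k hq2
    have hfinal : k * k + q * (m + k) + r * m ≤ (m + 1) * m + 2 * k ^ 2 := by
      have e1 : q * (m + k) = q * m + q * k := by ring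
      have e2 : (m + 1) * m = q * m + r * m := by rw [← hr2, add_mul]
      have e3 : 2 * k ^ 2 = k * k + k * k := by ring
      linarith [key]
    have h3 : 2 * H.edgeFinset.card ≤ (m + 1) * m + 2 * k ^ 2 := le_trans h2e hfinal
    have h4 : 2 * ((n - k).choose 2 + k ^ 2) = (m + 1) * m + 2 * k ^ 2 := by
      rw [Nat.mul_add, hch, hnk, Nat.add_sub_cancel]
    omega
  calc G.edgeFinset.card ≤ H.edgeFinset.card := hedgecard
    _ ≤ (n - k).choose 2 + k ^ 2 := hfk
    _ ≤ _ := Erdos2.f_max n d k ((n - 1) / 2) hkd (by omega) (by omega)
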